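/- Let κ be an infinite cardinal and assume MA_κ(Q⊚). Let ⟨(T_i, η_i) : i < κ⟩ be a family where each T_i ⊆ 2^{<ω} is a perfect tree and each η_i ∈ 2^ω. Then there exists a set A ⊆ 2^{<ω} such that for every i < κ: (α) for all but finitely many n ∈ ω, η_i↾n ∉ A; and (β) for infinitely many n ∈ ω, A ∩ T_i ∩ 2^n ≠ ∅. -/
import Mathlib

/-- Restriction `η↾l` of `η ∈ 2^ω` to its first `l` entries, as a finite binary sequence. -/
def restrict (η : ℕ → Bool) (l : ℕ) : List Bool := List.ofFn (fun i : Fin l => η i)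

/-- Conditions of the forcing notion `Q⊚`: pairs `⟨a, w⟩` with `a` a finite set of
finite binary sequences and `w` a finite set of elements of Cantor space. -/
abbrev QCirc : Type := Finset (List Bool) × Finset (ℕ → Bool)

/-- The order of `Q⊚` (a stronger condition is the greater one). -/
def QCirc.le (p q : QCirc) : Prop :=
  p.1 ⊆ q.1 ∧ p.2 ⊆ q.2 ∧
    ∀ η ∈ p.2, ∀ l : ℕ, restrict η l ∈ q.1 → restrict η l ∈ p.1

/-- Compatibility in a forcing notion: a common upper bound exists. -/
def PCompat {P : Type} (le : P → P → Prop) (p q : P) : Prop :=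
  ∃ r, le p r ∧ le q r


/-- A set `A ⊆ P` is an antichain if its elements are pairwise incompatible. -/
def PAntichain {P : Type} (le : P → P → Prop) (A : Set P) : Prop :=
  ∀ p ∈ A, ∀ q ∈ A, p ≠ q → ¬ PCompat le p q

/-- A maximal antichain: an antichain such that every condition is compatible
with some of its members. -/
def PMaxAntichain {P : Type} (le : P → P → Prop) (A : Set P) : Prop :=
  PAntichain le A ∧ ∀ p : P, ∃ q ∈ A, PCompat le p q

/-- A filter on a forcing notion: downward closed and upward directed. -/
def PFilterOn {P : Type} (le : P → P → Prop) (G : Set P) : Prop :=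
  (∀ p q : P, q ∈ G → le p q → p ∈ G) ∧
    (∀ p ∈ G, ∀ q ∈ G, ∃ r ∈ G, le p r ∧ le q r)

/-- `MA_κ(P)`: for every family of `κ` many maximal antichains of `P` and every `p ∈ P`
there is a filter containing `p` and meeting every antichain of the family. -/
def MAax {P : Type} (le : P → P → Prop) (κ : Cardinal.{0}) : Prop :=
  ∀ (ι : Type) (A : ι → Set P), Cardinal.mk ι ≤ κ →
    (∀ i, PMaxAntichain le (A i)) →
    ∀ p : P, ∃ G : Set P, PFilterOn le G ∧ p ∈ G ∧ ∀ i, (G ∩ A i).Nonempty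

/-- `T ⊆ 2^{<ω}` is a tree: it is closed under initial segments. -/
def IsTree (T : Set (List Bool)) : Prop :=
  ∀ μ ∈ T, ∀ ν : List Bool, ν <+: μ → ν ∈ T

/-- A perfect tree: a nonempty tree in which every node has two incomparable extensions. -/
def PerfectTree (T : Set (List Bool)) : Prop :=
  IsTree T ∧ T.Nonempty ∧
    ∀ ν ∈ T, ∃ μ₁ ∈ T, ∃ μ₂ ∈ T,
      ν <+: μ₁ ∧ ν <+: μ₂ ∧ ¬ μ₁ <+: μ₂ ∧ ¬ μ₂ <+: μ₁

/-! ### Auxiliary lemmas -/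

@[simp] lemma length_restrict (η : ℕ → Bool) (l : ℕ) : (restrict η l).length = l := by
  simp [restrict]

lemma prefix_restrict {ν : List Bool} {η : ℕ → Bool} {l : ℕ}
    (h : ν <+: restrict η l) : ν = restrict η ν.length := by
  have hlen : ν.length ≤ l := by simpa using h.length_le
  apply List.ext_getElem (by simp)
  intro i h1 h2
  have := h.getElem h1
  simpa [restrict, List.getElem_ofFn] using this

lemma restrict_prefix {η : ℕ → Bool} {k l : ℕ} (h : k ≤ l) :
    restrict η k <+: restrict η l := by
  refine List.prefix_iff_eq_take.2 ?_
  apply List.ext_getElem (by simp [h])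
  intro i h1 h2
  simp [restrict, List.getElem_ofFn]

lemma QCirc.le_refl (p : QCirc) : QCirc.le p p :=
  ⟨subset_rfl, subset_rfl, fun _ _ _ h => h⟩

lemma QCirc.le_trans {p q r : QCirc} (h1 : QCirc.le p q) (h2 : QCirc.le q r) :
    QCirc.le p r :=
  ⟨h1.1.trans h2.1, h1.2.1.trans h2.2.1,
    fun η hη l hl => h1.2.2 η hη l (h2.2.2 η (h1.2.1 hη) l hl)⟩

/-- In a perfect tree every node has a proper extension. -/
lemma PerfectTree.proper_ext {T : Set (List Bool)} (hT : PerfectTree T)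
    {ν : List Bool} (hν : ν ∈ T) : ∃ μ ∈ T, ν <+: μ ∧ ν.length < μ.length := by
  obtain ⟨μ₁, h₁, μ₂, h₂, p₁, p₂, i₁, _⟩ := hT.2.2 ν hν
  refine ⟨μ₁, h₁, p₁, ?_⟩
  rcases lt_or_eq_of_le p₁.length_le with h | h
  · exact h
  · exact absurd (p₁.eq_of_length h ▸ p₂) i₁

/-- In a perfect tree every node extends to arbitrary length. -/
lemma PerfectTree.long_ext {T : Set (List Bool)} (hT : PerfectTree T)
    {ν : List Bool} (hν : ν ∈ T) (N : ℕ) : ∃ μ ∈ T, ν <+: μ ∧ N ≤ μ.length := by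
  have key : ∀ k : ℕ, ∃ μ ∈ T, ν <+: μ ∧ ν.length + k ≤ μ.length := by
    intro k
    induction k with
    | zero => exact ⟨ν, hν, List.prefix_refl ν, le_refl _⟩
    | succ k ih =>
      obtain ⟨μ, hμ, hp, hl⟩ := ih
      obtain ⟨μ', hμ', hp', hl'⟩ := hT.proper_ext hμ
      exact ⟨μ', hμ', hp.trans hp', by omega⟩
  obtain ⟨μ, hμ, hp, hl⟩ := key N
  exact ⟨μ, hμ, hp, by omega⟩

/-- In a perfect tree every node has an extension which is not an initial segment
of a given branch. -/
lemma PerfectTree.avoid_one {T : Set (List Bool)} (hT : PerfectTree T)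
    {ν : List Bool} (hν : ν ∈ T) (η : ℕ → Bool) :
    ∃ μ ∈ T, ν <+: μ ∧ μ ≠ restrict η μ.length := by
  obtain ⟨μ₁, h₁, μ₂, h₂, p₁, p₂, i₁, i₂⟩ := hT.2.2 ν hν
  by_cases e₁ : μ₁ = restrict η μ₁.length
  · refine ⟨μ₂, h₂, p₂, fun e₂ => ?_⟩
    rcases le_total μ₁.length μ₂.length with h | h
    · exact i₁ (e₁ ▸ e₂ ▸ restrict_prefix h)
    · exact i₂ (e₁ ▸ e₂ ▸ restrict_prefix h)
  · exact ⟨μ₁, h₁, p₁, e₁⟩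

/-- Avoidance of being an initial segment is preserved by extension. -/
lemma avoid_mono {ν μ : List Bool} {η : ℕ → Bool} (h : ν <+: μ)
    (hν : ν ≠ restrict η ν.length) (hμ : μ = restrict η μ.length) : False := by
  exact hν (prefix_restrict (hμ ▸ h))

/-- In a perfect tree there is a long node avoiding finitely many branches. -/
lemma PerfectTree.avoid_finset {T : Set (List Bool)} (hT : PerfectTree T)
    (w : Finset (ℕ → Bool)) (N : ℕ) :
    ∃ ν ∈ T, N ≤ ν.length ∧ ∀ η ∈ w, ν ≠ restrict η ν.length := by
  classical
  induction w using Finset.induction_on with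
  | empty =>
    obtain ⟨ν, hν⟩ := hT.2.1
    obtain ⟨μ, hμ, _, hl⟩ := hT.long_ext hν N
    exact ⟨μ, hμ, hl, by simp⟩
  | @insert η s hx ih =>
    obtain ⟨ν, hν, hl, hav⟩ := ih
    obtain ⟨μ, hμ, hp, hμη⟩ := hT.avoid_one hν η
    refine ⟨μ, hμ, le_trans hl (by simpa using hp.length_le), ?_⟩
    intro η' hη'
    rcases Finset.mem_insert.1 hη' with rfl | hη'
    · exact hμη
    · exact fun e => avoid_mono hp (hav η' hη') e

/-- Every dense set in a reflexive transitive forcing notion contains a maximal antichain. -/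
lemma dense_contains_maxAntichain {P : Type} (le : P → P → Prop)
    (hrefl : ∀ p, le p p) (htrans : ∀ {p q r}, le p q → le q r → le p r)
    (D : Set P) (hD : ∀ p, ∃ q ∈ D, le p q) :
    ∃ A : Set P, A ⊆ D ∧ PMaxAntichain le A := by
  classical
  set S : Set (Set P) := {A | A ⊆ D ∧ PAntichain le A} with hS
  have hchain : ∀ c ⊆ S, IsChain (· ⊆ ·) c → ∃ ub ∈ S, ∀ s ∈ c, s ⊆ ub := by
    intro c hcS hc
    refine ⟨⋃₀ c, ⟨?_, ?_⟩, fun s hs => Set.subset_sUnion_of_mem hs⟩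
    · exact Set.sUnion_subset fun s hs => (hcS hs).1
    · intro p hp q hq hpq
      obtain ⟨s, hs, hps⟩ := hp
      obtain ⟨t, ht, hqt⟩ := hq
      rcases hc.total hs ht with h | h
      · exact (hcS ht).2 p (h hps) q hqt hpq
      · exact (hcS hs).2 p hps q (h hqt) hpq
  obtain ⟨M, hM⟩ := zorn_subset S hchain
  refine ⟨M, hM.prop.1, hM.prop.2, ?_⟩
  intro p
  obtain ⟨d, hdD, hpd⟩ := hD p
  by_cases hcomp : ∃ q ∈ M, PCompat le d q
  · obtain ⟨q, hq, r, hdr, hqr⟩ := hcomp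
    exact ⟨q, hq, r, htrans hpd hdr, hqr⟩
  · push_neg at hcomp
    have hdM : d ∉ M := fun hd => hcomp d hd ⟨d, hrefl d, hrefl d⟩
    have : insert d M ∈ S := by
      refine ⟨Set.insert_subset hdD hM.prop.1, ?_⟩
      intro x hx y hy hxy
      rcases hx with rfl | hx
      · rcases hy with rfl | hy
        · exact absurd rfl hxy
        · exact hcomp y hy
      · rcases hy with rfl | hy
        · exact fun ⟨r, hxr, hyr⟩ => hcomp x hx ⟨r, hyr, hxr⟩
        · exact hM.prop.2 x hx y hy hxy
    exact absurd (hM.2 this (Set.subset_insert d M) (Set.mem_insert d M)) hdM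

/-- Under `MA_κ(Q⊚)`, for every family of `κ` many pairs `(T_i, η_i)` (a perfect tree and a
branch of Cantor space) there is `A ⊆ 2^{<ω}` such that for each `i`:
(α) `η_i↾n ∉ A` for all but finitely many `n`; and
(β) `A ∩ T_i ∩ 2^n ≠ ∅` for infinitely many `n`. -/
theorem ma_qcirc_gives_slalom (κ : Cardinal.{0}) (hκ : Cardinal.aleph0 ≤ κ)
    (hMA : MAax QCirc.le κ)
    (ι : Type) (hι : Cardinal.mk ι ≤ κ)
    (T : ι → Set (List Bool)) (hT : ∀ i, PerfectTree (T i)) (η : ι → ℕ → Bool) :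
    ∃ A : Set (List Bool), ∀ i : ι,
      (∃ N : ℕ, ∀ n ≥ N, restrict (η i) n ∉ A) ∧
      (∀ N : ℕ, ∃ n ≥ N, ∃ ν ∈ A, ν ∈ T i ∧ ν.length = n) := by
  classical
  -- dense sets
  set D : ι → Set QCirc := fun i => {p | η i ∈ p.2} with hD
  set E : ι × ℕ → Set QCirc :=
    fun x => {p | ∃ ν ∈ p.1, ν ∈ T x.1 ∧ x.2 ≤ ν.length} with hE
  have hDdense : ∀ i, ∀ p : QCirc, ∃ q ∈ D i, QCirc.le p q := by
    intro i p
    refine ⟨(p.1, insert (η i) p.2), Finset.mem_insert_self _ _,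
      subset_rfl, Finset.subset_insert _ _, fun _ _ _ h => h⟩
  have hEdense : ∀ x : ι × ℕ, ∀ p : QCirc, ∃ q ∈ E x, QCirc.le p q := by
    rintro ⟨i, N⟩ p
    obtain ⟨ν, hν, hl, hav⟩ := (hT i).avoid_finset p.2 N
    refine ⟨(insert ν p.1, p.2), ⟨ν, Finset.mem_insert_self _ _, hν, hl⟩,
      Finset.subset_insert _ _, subset_rfl, ?_⟩
    intro η' hη' l hl'
    rcases Finset.mem_insert.1 hl' with h | h
    · exfalso
      have hlen : l = ν.length := by
        have := congrArg List.length h; simpa using this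
      exact hav η' hη' (hlen ▸ h.symm)
    · exact h
  -- maximal antichains inside the dense sets
  have hDA : ∀ i, ∃ A : Set QCirc, A ⊆ D i ∧ PMaxAntichain QCirc.le A :=
    fun i => dense_contains_maxAntichain QCirc.le QCirc.le_refl
      (fun h1 h2 => QCirc.le_trans h1 h2) (D i) (hDdense i)
  have hEA : ∀ x : ι × ℕ, ∃ A : Set QCirc, A ⊆ E x ∧ PMaxAntichain QCirc.le A :=
    fun x => dense_contains_maxAntichain QCirc.le QCirc.le_refl
      (fun h1 h2 => QCirc.le_trans h1 h2) (E x) (hEdense x)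
  choose AD hADsub hADmax using hDA
  choose AE hAEsub hAEmax using hEA
  -- combine into one family
  set J : Type := ι ⊕ ι × ℕ with hJ
  have hJcard : Cardinal.mk J ≤ κ := by
    have h1 : Cardinal.mk (ι × ℕ) ≤ κ := by
      rw [Cardinal.mk_prod]
      simp only [Cardinal.lift_id, Cardinal.mk_nat]
      calc Cardinal.mk ι * Cardinal.aleph0 ≤ κ * κ := mul_le_mul' hι hκ
        _ = κ := Cardinal.mul_eq_self hκ
    calc Cardinal.mk J = Cardinal.mk ι + Cardinal.mk (ι × ℕ) := by
          simp [hJ, Cardinal.mk_sum]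
      _ ≤ κ + κ := add_le_add hι h1
      _ = κ := Cardinal.add_eq_self hκ
  set Afam : J → Set QCirc := Sum.elim AD AE with hAfam
  have hAfammax : ∀ j, PMaxAntichain QCirc.le (Afam j) := by
    rintro (i | x)
    · exact hADmax i
    · exact hAEmax x
  obtain ⟨G, hGfil, _, hGmeet⟩ := hMA J Afam hJcard hAfammax (∅, ∅)
  refine ⟨{ν | ∃ p ∈ G, ν ∈ p.1}, fun i => ⟨?_, ?_⟩⟩
  · -- (α)
    obtain ⟨p, hpG, hpD⟩ := hGmeet (Sum.inl i)
    have hηp : η i ∈ p.2 := hADsub i hpD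
    refine ⟨p.1.sup List.length + 1, fun n hn ⟨q, hqG, hq⟩ => ?_⟩
    obtain ⟨r, hrG, hpr, hqr⟩ := hGfil.2 p hpG q hqG
    have : restrict (η i) n ∈ p.1 := hpr.2.2 (η i) hηp n (hqr.1 hq)
    have := Finset.le_sup (f := List.length) this
    simp at this; omega
  · -- (β)
    intro N
    obtain ⟨p, hpG, hpE⟩ := hGmeet (Sum.inr (i, N))
    obtain ⟨ν, hνp, hνT, hνl⟩ := hAEsub (i, N) hpE
    exact ⟨ν.length, hνl, ν, ⟨p, hpG, hνp⟩, hνT, rfl⟩
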